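/- arXiv:0805.2481 — 3 statements merged into one kernel-verified Lean document; each statement's English description precedes it below -/
import Mathlib

section
/- In G = H_1(q) ⋊ Sp(2,q), the set H_1(q) \ Z(H_1(q)) of non-central Heisenberg elements forms a single conjugacy class of G, of size q(q² − 1). -/
/-- The Heisenberg group `H₁(q)`: pairs `(w, z)` with `w ∈ F²`, `z ∈ F`. -/
@[ext]
structure Heis (F : Type*) where
  w : Fin 2 → F
  z : F

namespace Heis

variable {F : Type*} [Field F]

instance : Mul (Heis F) :=
  ⟨fun p q => ⟨p.w + q.w, p.z + q.z + (p.w 0 * q.w 1 - p.w 1 * q.w 0) / 2⟩⟩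

@[simp] lemma mul_w (p q : Heis F) : (p * q).w = p.w + q.w := rfl
@[simp] lemma mul_z (p q : Heis F) :
    (p * q).z = p.z + q.z + (p.w 0 * q.w 1 - p.w 1 * q.w 0) / 2 := rfl

instance : One (Heis F) := ⟨⟨0, 0⟩⟩

@[simp] lemma one_w : (1 : Heis F).w = 0 := rfl
@[simp] lemma one_z : (1 : Heis F).z = 0 := rfl

instance : Inv (Heis F) := ⟨fun p => ⟨-p.w, -p.z⟩⟩

@[simp] lemma inv_w (p : Heis F) : p⁻¹.w = -p.w := rfl
@[simp] lemma inv_z (p : Heis F) : p⁻¹.z = -p.z := rfl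

instance instGroup : Group (Heis F) where
  mul_assoc a b c := by
    ext <;> simp [Pi.add_apply] <;> ring
  one_mul a := by ext <;> simp
  mul_one a := by ext <;> simp
  inv_mul_cancel a := by
    ext
    · simp
    · show -a.z + a.z + ((-a.w) 0 * a.w 1 - (-a.w) 1 * a.w 0) / 2 = 0
      simp only [Pi.neg_apply]
      ring

end Heis

open Matrix SemidirectProduct

abbrev SL2 (F : Type*) [Field F] := Matrix.SpecialLinearGroup (Fin 2) F

/-- The element `g_{(s,w,z)} = s · h_{(w,z)}` of `G = H₁(q) ⋊ Sp(2,q)`. -/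
def gel {F : Type*} [Field F] (φ : SL2 F →* MulAut (Heis F))
    (s : SL2 F) (w : Fin 2 → F) (z : F) : Heis F ⋊[φ] SL2 F :=
  SemidirectProduct.inr s * SemidirectProduct.inl ⟨w, z⟩

section Aux

variable {F : Type*} [Field F] (φ : SL2 F →* MulAut (Heis F))

lemma gel_one (w : Fin 2 → F) (z : F) : gel φ 1 w z = inl ⟨w, z⟩ := by
  simp [gel]

lemma heis_conj (v h : Heis F) :
    v * h * v⁻¹ = ⟨h.w, h.z + 2 * (v.w 0 * h.w 1 - v.w 1 * h.w 0) / 2⟩ := by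
  ext <;>
    simp only [Heis.mul_w, Heis.mul_z, Heis.inv_w, Heis.inv_z, Pi.add_apply, Pi.neg_apply]
  · abel
  · ring

lemma conj_inl (v h : Heis F) :
    IsConj (inl h : Heis F ⋊[φ] SL2 F) (inl (v * h * v⁻¹)) := by
  rw [isConj_iff]
  exact ⟨inl v, by rw [← map_inv inl v, ← _root_.map_mul, ← _root_.map_mul]⟩

lemma conj_z (h2 : (2 : F) ≠ 0) (w : Fin 2 → F) (hw : w ≠ 0) (z z' : F) :
    IsConj (inl ⟨w, z⟩ : Heis F ⋊[φ] SL2 F) (inl ⟨w, z'⟩) := by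
  by_cases h0 : w 0 = 0
  · have h1 : w 1 ≠ 0 := by
      intro h1
      apply hw
      funext i
      fin_cases i <;> assumption
    have := conj_inl φ (⟨![(z' - z) / w 1, 0], 0⟩ : Heis F) ⟨w, z⟩
    rwa [heis_conj, show (⟨w, z + 2 * ((![(z' - z) / w 1, 0] : Fin 2 → F) 0 * w 1
        - (![(z' - z) / w 1, 0] : Fin 2 → F) 1 * w 0) / 2⟩ : Heis F) = ⟨w, z'⟩ from ?_] at this
    congr 1
    simp only [Matrix.cons_val_zero, Matrix.cons_val_one, Matrix.head_cons]
    field_simp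
    ring
  · have := conj_inl φ (⟨![0, (z - z') / w 0], 0⟩ : Heis F) ⟨w, z⟩
    rwa [heis_conj, show (⟨w, z + 2 * ((![0, (z - z') / w 0] : Fin 2 → F) 0 * w 1
        - (![0, (z - z') / w 0] : Fin 2 → F) 1 * w 0) / 2⟩ : Heis F) = ⟨w, z'⟩ from ?_] at this
    congr 1
    simp only [Matrix.cons_val_zero, Matrix.cons_val_one, Matrix.head_cons]
    field_simp
    ring

lemma conj_s (hφ : ∀ (s : SL2 F) (w : Fin 2 → F) (z : F),
      φ s ⟨w, z⟩ = ⟨(s : Matrix (Fin 2) (Fin 2) F).mulVec w, z⟩)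
    (s : SL2 F) (w : Fin 2 → F) (z : F) :
    IsConj (inl ⟨w, z⟩ : Heis F ⋊[φ] SL2 F)
      (inl ⟨(s : Matrix (Fin 2) (Fin 2) F).mulVec w, z⟩) := by
  rw [isConj_iff]
  refine ⟨inr s, ?_⟩
  rw [← map_inv, ← inl_aut, hφ]

lemma exists_s (w : Fin 2 → F) (hw : w ≠ 0) :
    ∃ s : SL2 F, (s : Matrix (Fin 2) (Fin 2) F).mulVec ![1, 0] = w := by
  by_cases h0 : w 0 = 0
  · have h1 : w 1 ≠ 0 := by
      intro h1
      apply hw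
      funext i
      fin_cases i <;> assumption
    refine ⟨⟨!![0, -(w 1)⁻¹; w 1, 0], ?_⟩, ?_⟩
    · simp [Matrix.det_fin_two_of]
      field_simp
    · funext i
      fin_cases i <;>
        simp [Matrix.mulVec, dotProduct, Fin.sum_univ_two, h0]
  · refine ⟨⟨!![w 0, 0; w 1, (w 0)⁻¹], ?_⟩, ?_⟩
    · simp [Matrix.det_fin_two_of]
      field_simp
    · funext i
      fin_cases i <;>
        simp [Matrix.mulVec, dotProduct, Fin.sum_univ_two]

end Aux

/-- In `G = H₁(q) ⋊ Sp(2,q)`, the set `H₁(q) \ Z(H₁(q))` of non-central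
Heisenberg elements forms a single conjugacy class of `G`, of size `q(q²−1)`. -/
theorem noncentral_heisenberg_single_class {F : Type*} [Field F] [Fintype F]
    (q : ℕ) (hF : Fintype.card F = q) (hq : Odd q)
    (φ : SL2 F →* MulAut (Heis F))
    (hφ : ∀ (s : SL2 F) (w : Fin 2 → F) (z : F),
      φ s ⟨w, z⟩ = ⟨(s : Matrix (Fin 2) (Fin 2) F).mulVec w, z⟩) :
    (∀ (w w' : Fin 2 → F) (z z' : F), w ≠ 0 → w' ≠ 0 →
      IsConj (gel φ 1 w z) (gel φ 1 w' z')) ∧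
    Nat.card {g : Heis F ⋊[φ] SL2 F | ∃ (w : Fin 2 → F) (z : F), w ≠ 0 ∧ g = gel φ 1 w z} =
      q * (q ^ 2 - 1) := by
  classical
  have h2 : (2 : F) ≠ 0 := by
    intro h
    obtain ⟨k, hk⟩ := hq
    have hc : ((Fintype.card F : ℕ) : F) = 0 := FiniteField.cast_card_eq_zero F
    rw [hF, hk] at hc
    push_cast at hc
    rw [h] at hc
    simp at hc
  have e0ne : (![1, 0] : Fin 2 → F) ≠ 0 := by
    intro h
    have := congrFun h 0
    simp at this
  constructor
  · intro w w' z z' hw hw'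
    obtain ⟨s, hs⟩ := exists_s w hw
    obtain ⟨s', hs'⟩ := exists_s w' hw'
    rw [gel_one, gel_one]
    have c1 : IsConj (inl ⟨![1, 0], z⟩ : Heis F ⋊[φ] SL2 F) (inl ⟨w, z⟩) := by
      have := conj_s φ hφ s ![1, 0] z
      rwa [hs] at this
    have c2 := conj_z φ h2 ![1, 0] e0ne z z'
    have c3 : IsConj (inl ⟨![1, 0], z'⟩ : Heis F ⋊[φ] SL2 F) (inl ⟨w', z'⟩) := by
      have := conj_s φ hφ s' ![1, 0] z'
      rwa [hs'] at this
    exact c1.symm.trans (c2.trans c3)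
  · have hset : {g : Heis F ⋊[φ] SL2 F | ∃ (w : Fin 2 → F) (z : F), w ≠ 0 ∧ g = gel φ 1 w z}
        = Set.range (fun p : {w : Fin 2 → F // w ≠ 0} × F =>
            (inl ⟨p.1.1, p.2⟩ : Heis F ⋊[φ] SL2 F)) := by
      ext g
      constructor
      · rintro ⟨w, z, hw, rfl⟩
        exact ⟨(⟨w, hw⟩, z), (gel_one φ w z).symm⟩
      · rintro ⟨⟨⟨w, hw⟩, z⟩, rfl⟩
        exact ⟨w, z, hw, (gel_one φ w z).symm⟩
    rw [hset, Nat.card_range_of_injective (f := fun p : {w : Fin 2 → F // w ≠ 0} × F =>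
        (inl ⟨p.1.1, p.2⟩ : Heis F ⋊[φ] SL2 F))]
    · rw [Nat.card_prod]
      have hw : Nat.card {w : Fin 2 → F // w ≠ 0} = q ^ 2 - 1 := by
        rw [Nat.card_eq_fintype_card]
        have : Fintype.card {w : Fin 2 → F // w ≠ 0}
            = Fintype.card (Fin 2 → F) - 1 := by
          rw [Fintype.card_subtype_compl, Fintype.card_subtype_eq (0 : Fin 2 → F)]
        rw [this, Fintype.card_fun]
        simp [hF]
      have hFq : Nat.card F = q := by rw [Nat.card_eq_fintype_card, hF]
      rw [hw, hFq, Nat.mul_comm]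
    · intro a b hab
      have h1 := SemidirectProduct.inl_injective hab
      have hw := congrArg Heis.w h1
      have hz := congrArg Heis.z h1
      exact Prod.ext (Subtype.ext hw) hz
end

section
/- Let g = g_{(s,0,z)} ∈ G = H_1(q) ⋊ Sp(2,q) where s ∈ Sp(2,q) does not have eigenvalue 1. Then the centralizer of g in G equals {g_{(s₁,0,z₁)} : s₁ ∈ C_{Sp(2,q)}(s), z₁ ∈ GF(q)}, so |C_G(g)| = q·|C_{Sp(2,q)}(s)|. -/
open Matrix SemidirectProduct

/-- Let `g = g_{(s,0,z)} ∈ G = H₁(q) ⋊ Sp(2,q)` where `s ∈ Sp(2,q)` does not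
have eigenvalue 1.  Then `C_G(g) = {g_{(s₁,0,z₁)} : s₁ ∈ C_{Sp(2,q)}(s), z₁ ∈ GF(q)}`,
so `|C_G(g)| = q · |C_{Sp(2,q)}(s)|`. -/
theorem centralizer_of_no_eigenvalue_one {F : Type*} [Field F] [Fintype F]
    (q : ℕ) (hF : Fintype.card F = q) (hq : Odd q)
    (φ : SL2 F →* MulAut (Heis F))
    (hφ : ∀ (s : SL2 F) (w : Fin 2 → F) (z : F),
      φ s ⟨w, z⟩ = ⟨(s : Matrix (Fin 2) (Fin 2) F).mulVec w, z⟩)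
    (s : SL2 F) (hs : ∀ w : Fin 2 → F, (s : Matrix (Fin 2) (Fin 2) F).mulVec w = w → w = 0)
    (z : F) :
    (∀ g : Heis F ⋊[φ] SL2 F,
      g ∈ Subgroup.centralizer {gel φ s 0 z} ↔
        ∃ (s₁ : SL2 F) (z₁ : F), s₁ ∈ Subgroup.centralizer {s} ∧ g = gel φ s₁ 0 z₁) ∧
    Nat.card (Subgroup.centralizer {gel φ s 0 z} : Subgroup (Heis F ⋊[φ] SL2 F)) =
      q * Nat.card (Subgroup.centralizer {s} : Subgroup (SL2 F)) := by
  -- explicit form of `gel φ s₁ 0 z₁`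
  have hgel : ∀ (s₁ : SL2 F) (z₁ : F), gel φ s₁ 0 z₁ = ⟨⟨0, z₁⟩, s₁⟩ := by
    intro s₁ z₁
    show SemidirectProduct.inr s₁ * SemidirectProduct.inl ⟨0, z₁⟩ =
      (⟨⟨0, z₁⟩, s₁⟩ : Heis F ⋊[φ] SL2 F)
    rw [SemidirectProduct.mul_def]
    simp only [SemidirectProduct.left_inl, SemidirectProduct.right_inl,
      SemidirectProduct.left_inr, SemidirectProduct.right_inr, one_mul, mul_one, hφ,
      Matrix.mulVec_zero]
  have key : ∀ g : Heis F ⋊[φ] SL2 F,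
      g ∈ Subgroup.centralizer {gel φ s 0 z} ↔
        ∃ (s₁ : SL2 F) (z₁ : F), s₁ ∈ Subgroup.centralizer {s} ∧ g = gel φ s₁ 0 z₁ := by
    intro g
    rw [Subgroup.mem_centralizer_singleton_iff, hgel]
    constructor
    · intro h
      obtain ⟨⟨w₁, z₁⟩, s₁⟩ := g
      rw [SemidirectProduct.mul_def, SemidirectProduct.mul_def] at h
      simp only [hφ, Matrix.mulVec_zero] at h
      have hR : s₁ * s = s * s₁ := congrArg SemidirectProduct.right h
      have hL := congrArg SemidirectProduct.left h
      simp only at hL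
      -- left components
      have hw : w₁ + 0 = 0 + (s : Matrix (Fin 2) (Fin 2) F).mulVec w₁ :=
        congrArg Heis.w hL
      have hw0 : w₁ = 0 := by
        apply hs
        rw [zero_add, add_zero] at hw
        exact hw.symm
      refine ⟨s₁, z₁, Subgroup.mem_centralizer_singleton_iff.mpr hR, ?_⟩
      rw [hgel, hw0]
    · rintro ⟨s₁, z₁, hc, rfl⟩
      rw [hgel, SemidirectProduct.mul_def, SemidirectProduct.mul_def]
      simp only [hφ, Matrix.mulVec_zero]
      have hR : s₁ * s = s * s₁ := Subgroup.mem_centralizer_singleton_iff.mp hc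
      refine SemidirectProduct.ext ?_ hR
      show (Heis.mk 0 z₁ * Heis.mk 0 z) = (Heis.mk 0 z * Heis.mk 0 z₁)
      ext <;> simp <;> ring
  refine ⟨key, ?_⟩
  -- bijection with F × centralizer {s}
  have hb : Function.Bijective
      (fun p : F × (Subgroup.centralizer {s} : Subgroup (SL2 F)) =>
        (⟨gel φ p.2.1 0 p.1, (key _).mpr ⟨p.2.1, p.1, p.2.2, rfl⟩⟩ :
          (Subgroup.centralizer {gel φ s 0 z} : Subgroup (Heis F ⋊[φ] SL2 F)))) := by
    constructor
    · rintro ⟨z₁, s₁, h₁⟩ ⟨z₂, s₂, h₂⟩ hEq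
      have : gel φ s₁ 0 z₁ = gel φ s₂ 0 z₂ := congrArg Subtype.val hEq
      rw [hgel, hgel] at this
      have hr : s₁ = s₂ := congrArg SemidirectProduct.right this
      have hl : z₁ = z₂ := congrArg (fun x => (SemidirectProduct.left x).z) this
      simp only [Prod.mk.injEq, Subtype.mk.injEq]
      exact ⟨hl, hr⟩
    · rintro ⟨g, hg⟩
      obtain ⟨s₁, z₁, hc, rfl⟩ := (key g).mp hg
      exact ⟨(z₁, ⟨s₁, hc⟩), rfl⟩
  rw [← Nat.card_eq_of_bijective _ hb, Nat.card_prod, Nat.card_eq_fintype_card, hF]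
end

section
/- Let s = [[1,0],[ε,1]] ∈ Sp(2,q) with ε ≠ 0 and w = (ν^m, 0)ᵀ with ν^m ≠ 0, and let g = g_{(s,w,0)} ∈ G = H_1(q) ⋊ Sp(2,q). Then |C_G(g)| = q², so the conjugacy class of g has size q²(q² − 1). -/
open Matrix SemidirectProduct

section Aux

variable {F : Type*} [Field F]

def lowerSL (t : F) : SL2 F := ⟨!![1, 0; t, 1], by simp [Matrix.det_fin_two_of]⟩

@[simp] lemma lowerSL_coe (t : F) :
    ((lowerSL t : SL2 F) : Matrix (Fin 2) (Fin 2) F) = !![1, 0; t, 1] := rfl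

lemma mulVec_two (M : Matrix (Fin 2) (Fin 2) F) (v : Fin 2 → F) :
    M.mulVec v = ![M 0 0 * v 0 + M 0 1 * v 1, M 1 0 * v 0 + M 1 1 * v 1] := by
  funext i
  fin_cases i <;> simp [Matrix.mulVec, dotProduct, Fin.sum_univ_two]

variable (φ : SL2 F →* MulAut (Heis F)) (ε c : F)

def elt (u z : F) : Heis F ⋊[φ] SL2 F :=
  ⟨⟨![u, ε * u * (u + c) / (2 * c)], z⟩, lowerSL (ε * u / c)⟩

variable {φ ε c} in
lemma mem_centralizer_iff (h2 : (2 : F) ≠ 0) (hε : ε ≠ 0) (hc : c ≠ 0)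
    (hφ : ∀ (s : SL2 F) (w : Fin 2 → F) (z : F),
      φ s ⟨w, z⟩ = ⟨(s : Matrix (Fin 2) (Fin 2) F).mulVec w, z⟩)
    (s : SL2 F) (hs : (s : Matrix (Fin 2) (Fin 2) F) = !![1, 0; ε, 1])
    (x : Heis F ⋊[φ] SL2 F) :
    x ∈ Subgroup.centralizer {gel φ s ![c, 0] 0} ↔
      x = elt φ ε c (x.left.w 0) x.left.z := by
  obtain ⟨⟨u, z1⟩, t⟩ := x
  rw [Subgroup.mem_centralizer_singleton_iff]
  have hgl : (gel φ s ![c, 0] 0).left = ⟨![c, ε * c], 0⟩ := by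
    show (1 : Heis F) * φ s ⟨![c, 0], 0⟩ = _
    rw [one_mul, hφ, hs, mulVec_two]
    norm_num
  have hgr : (gel φ s ![c, 0] 0).right = s := by
    show s * 1 = s; rw [mul_one]
  constructor
  · intro h
    -- right part
    have hR : t * s = s * t := by
      have := congrArg SemidirectProduct.right h
      simpa [hgr] using this
    set M := (t : Matrix (Fin 2) (Fin 2) F) with hMdef
    have hMA : M * !![1, 0; ε, 1] = !![1, 0; ε, 1] * M := by
      have := congrArg (fun y : SL2 F => (y : Matrix (Fin 2) (Fin 2) F)) hR
      simpa [hs] using this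
    have e00 := congrFun (congrFun hMA 0) 0
    have e10 := congrFun (congrFun hMA 1) 0
    simp [Matrix.mul_apply, Fin.sum_univ_two] at e00 e10
    have h01 : M 0 1 = 0 := e00.resolve_right hε
    have h11 : M 1 1 = M 0 0 := by
      apply mul_right_cancel₀ hε
      linear_combination e10
    -- left part
    have hL := congrArg SemidirectProduct.left h
    simp only [SemidirectProduct.mul_left, hgl, hgr] at hL
    have hL' : (⟨u, z1⟩ : Heis F) * φ t ⟨![c, ε * c], 0⟩ =
        (⟨![c, ε * c], 0⟩ : Heis F) * φ s ⟨u, z1⟩ := hL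
    rw [hφ, hφ, hs, mulVec_two, mulVec_two, ← hMdef] at hL'
    have hw := congrArg Heis.w hL'
    have hz := congrArg Heis.z hL'
    simp only [Heis.mul_w, Heis.mul_z] at hw hz
    have hw0 := congrFun hw 0
    have hw1 := congrFun hw 1
    simp [Fin.sum_univ_two] at hw0 hw1 hz
    have h00 : M 0 0 = 1 := by
      apply mul_right_cancel₀ hc
      rw [one_mul]
      linear_combination hw0 - c * ε * h01
    have h10 : M 1 0 = ε * u 0 / c := by
      field_simp
      linear_combination hw1 - (ε * c) * h11 - (ε * c) * h00
    have hu1 : u 1 = ε * u 0 * (u 0 + c) / (2 * c) := by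
      field_simp
      field_simp [h01, h11, h00, h10] at hz
      linear_combination (-c) * hz + u 0 * (by rw [h10]; field_simp : c * M 1 0 = ε * u 0) +
        c * ε * u 0 * h11 + (c * ε * u 0 - c * u 1) * h00 - c * ε * u 1 * h01
    refine SemidirectProduct.ext ?_ ?_
    · show (⟨u, z1⟩ : Heis F) = ⟨![u 0, ε * u 0 * (u 0 + c) / (2 * c)], z1⟩
      refine Heis.ext (funext fun i => ?_) rfl
      fin_cases i
      · simp
      · simpa using hu1
    · show t = lowerSL (ε * u 0 / c)
      apply Subtype.ext
      rw [lowerSL_coe]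
      show M = _
      ext i j
      fin_cases i <;> fin_cases j <;> simp [h00, h01, h10, h11]
  · intro h
    have hcomm : ∀ u0 zz, elt φ ε c u0 zz * gel φ s ![c, 0] 0 =
        gel φ s ![c, 0] 0 * elt φ ε c u0 zz := by
      intro u0 zz
      refine SemidirectProduct.ext ?_ ?_
      · show (⟨![u0, ε * u0 * (u0 + c) / (2 * c)], zz⟩ : Heis F) *
            φ (lowerSL (ε * u0 / c)) (gel φ s ![c, 0] 0).left =
          (gel φ s ![c, 0] 0).left * φ (gel φ s ![c, 0] 0).right
            (⟨![u0, ε * u0 * (u0 + c) / (2 * c)], zz⟩ : Heis F)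
        rw [hgl, hgr, hφ, hφ, lowerSL_coe, hs, mulVec_two, mulVec_two]
        refine Heis.ext (funext fun i => ?_) ?_
        · simp only [Heis.mul_w]
          fin_cases i <;> simp <;> first | ring1 | (rw [div_mul_cancel₀ _ hc]; ring1)
        · simp only [Heis.mul_z, Matrix.cons_val_zero, Matrix.cons_val_one, Matrix.head_cons,
            Matrix.cons_val', Matrix.head_fin_const, Matrix.of_apply, Matrix.empty_val',
            Matrix.cons_val_fin_one]
          field_simp
          ring
      · simp only [SemidirectProduct.mul_right, hgr]
        show lowerSL (ε * u0 / c) * s = s * lowerSL (ε * u0 / c)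
        apply Subtype.ext
        show (_ : Matrix (Fin 2) (Fin 2) F) * _ = _ * _
        rw [lowerSL_coe, hs]
        ext i j
        fin_cases i <;> fin_cases j <;>
          simp [Matrix.mul_apply, Fin.sum_univ_two] <;> ring
    rw [h]
    exact hcomm _ _


def heisEquivProd : Heis F ≃ (Fin 2 → F) × F :=
  ⟨fun h => (h.w, h.z), fun p => ⟨p.1, p.2⟩, fun _ => rfl, fun _ => rfl⟩

def sdpEquivProd {N G : Type*} [Group N] [Group G] (ψ : G →* MulAut N) :
    N ⋊[ψ] G ≃ N × G :=
  ⟨fun x => (x.left, x.right), fun p => ⟨p.1, p.2⟩, fun _ => rfl, fun _ => rfl⟩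

lemma card_SL2 [Fintype F] :
    Nat.card (SL2 F) * (Fintype.card F - 1) =
      (Fintype.card F ^ 2 - 1) * (Fintype.card F ^ 2 - Fintype.card F) := by
  classical
  set δ := Matrix.GeneralLinearGroup.det (n := Fin 2) (R := F)
  have hsurj : Function.Surjective δ := by
    intro u
    refine ⟨⟨!![(u : F), 0; 0, 1], !![((u⁻¹ : Fˣ) : F), 0; 0, 1], ?_, ?_⟩, ?_⟩
    · ext i j; fin_cases i <;> fin_cases j <;>
        simp [Matrix.mul_apply, Fin.sum_univ_two]
    · ext i j; fin_cases i <;> fin_cases j <;>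
        simp [Matrix.mul_apply, Fin.sum_univ_two]
    · ext
      simp [δ, Matrix.GeneralLinearGroup.det, Matrix.det_fin_two]
  have e1 : SL2 F ≃ δ.ker := by
    refine ⟨fun A => ⟨Matrix.SpecialLinearGroup.toGL A, ?_⟩,
      fun M => ⟨(M.1 : Matrix (Fin 2) (Fin 2) F), ?_⟩, fun A => ?_, fun M => ?_⟩
    · have : ((δ (Matrix.SpecialLinearGroup.toGL A)) : F) = 1 := by
        simpa [δ] using A.2
      exact MonoidHom.mem_ker.2 (Units.ext this)
    · have : ((δ M.1 : Fˣ) : F) = 1 := by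
        rw [MonoidHom.mem_ker.1 M.2]; rfl
      simpa [δ] using this
    · rfl
    · exact Subtype.ext (Units.ext rfl)
  have hcard : Nat.card (GL (Fin 2) F) = Nat.card (SL2 F) * (Fintype.card F - 1) := by
    rw [Subgroup.card_eq_card_quotient_mul_card_subgroup δ.ker, ← Nat.card_congr e1,
      Nat.card_congr (QuotientGroup.quotientKerEquivOfSurjective δ hsurj).toEquiv,
      Nat.card_eq_fintype_card, Fintype.card_units, mul_comm]
  rw [← hcard, Matrix.card_GL_field, Fin.prod_univ_two]
  norm_num

end Aux

/-- Let `s = [[1,0],[ε,1]] ∈ Sp(2,q)` with `ε ≠ 0` and `w = (νᵐ, 0)ᵀ` with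
`νᵐ ≠ 0`, and let `g = g_{(s,w,0)} ∈ G = H₁(q) ⋊ Sp(2,q)`.  Then `|C_G(g)| = q²`,
so the conjugacy class of `g` has size `q²(q² − 1)`. -/
theorem centralizer_transvection_class {F : Type*} [Field F] [Fintype F]
    (q : ℕ) (hF : Fintype.card F = q) (hq : Odd q)
    (φ : SL2 F →* MulAut (Heis F))
    (hφ : ∀ (s : SL2 F) (w : Fin 2 → F) (z : F),
      φ s ⟨w, z⟩ = ⟨(s : Matrix (Fin 2) (Fin 2) F).mulVec w, z⟩)
    (ε : F) (hε : ε ≠ 0) (c : F) (hc : c ≠ 0)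
    (s : SL2 F) (hs : (s : Matrix (Fin 2) (Fin 2) F) = !![1, 0; ε, 1]) :
    Nat.card (Subgroup.centralizer {gel φ s ![c, 0] 0} : Subgroup (Heis F ⋊[φ] SL2 F)) =
      q ^ 2 ∧
    Nat.card {x : Heis F ⋊[φ] SL2 F | IsConj (gel φ s ![c, 0] 0) x} =
      q ^ 2 * (q ^ 2 - 1) := by
  have hq2 : 2 ≤ q := by
    have := Fintype.one_lt_card (α := F)
    omega
  have h2 : (2 : F) ≠ 0 := by
    have hchar : ringChar F ≠ 2 := by
      intro h
      have h' := FiniteField.even_card_iff_char_two.mp h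
      rw [hF] at h'
      rcases hq with ⟨k, hk⟩
      omega
    intro h20
    have hdvd : ringChar F ∣ 2 :=
      (CharP.cast_eq_zero_iff F (ringChar F) 2).mp (by exact_mod_cast h20)
    rcases (Nat.prime_two.eq_one_or_self_of_dvd _ hdvd) with h1 | h1
    · exact CharP.char_ne_one F (ringChar F) h1
    · exact hchar h1
  -- centralizer cardinality
  have memiff := fun x => mem_centralizer_iff h2 hε hc hφ s hs x
  let e : {x : Heis F ⋊[φ] SL2 F // x ∈ Subgroup.centralizer {gel φ s ![c, 0] 0}} ≃ F × F :=
  { toFun := fun x => (x.1.left.w 0, x.1.left.z)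
    invFun := fun p => ⟨elt φ ε c p.1 p.2, (memiff _).2 (by simp [elt])⟩
    left_inv := fun x => Subtype.ext ((memiff _).1 x.2).symm
    right_inv := fun p => by simp [elt] }
  have hC : Nat.card
      (Subgroup.centralizer {gel φ s ![c, 0] 0} : Subgroup (Heis F ⋊[φ] SL2 F)) = q ^ 2 := by
    rw [Nat.card_congr e, Nat.card_prod, Nat.card_eq_fintype_card, hF, pow_two]
  refine ⟨hC, ?_⟩
  -- conjugacy class cardinality
  set g := gel φ s ![c, 0] 0 with hg
  have hset : {x : Heis F ⋊[φ] SL2 F | IsConj g x} =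
      MulAction.orbit (ConjAct (Heis F ⋊[φ] SL2 F)) g := by
    ext x
    simp only [Set.mem_setOf_eq, ConjAct.mem_orbit_conjAct]
    exact isConj_comm
  have horb : Nat.card {x : Heis F ⋊[φ] SL2 F | IsConj g x} =
      (MulAction.stabilizer (ConjAct (Heis F ⋊[φ] SL2 F)) g).index := by
    rw [Nat.card_congr (Equiv.setCongr hset),
      Nat.card_congr (MulAction.orbitEquivQuotientStabilizer
        (ConjAct (Heis F ⋊[φ] SL2 F)) g), Subgroup.index_eq_card]
  have hstabmem : ∀ k : Heis F ⋊[φ] SL2 F, k ∈ Subgroup.centralizer {g} ↔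
      ConjAct.toConjAct k ∈ MulAction.stabilizer (ConjAct (Heis F ⋊[φ] SL2 F)) g := by
    intro k
    rw [Subgroup.centralizer_eq_comap_stabilizer]
    exact Iff.rfl
  let e2 : {x : Heis F ⋊[φ] SL2 F // x ∈ Subgroup.centralizer {g}} ≃
      ↥(MulAction.stabilizer (ConjAct (Heis F ⋊[φ] SL2 F)) g) :=
  { toFun := fun x => ⟨ConjAct.toConjAct x.1, (hstabmem x.1).1 x.2⟩
    invFun := fun y => ⟨ConjAct.ofConjAct y.1, (hstabmem _).2 (by simpa using y.2)⟩
    left_inv := fun x => by apply Subtype.ext; simp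
    right_inv := fun y => by apply Subtype.ext; simp }
  have hstab : Nat.card
      ↥(MulAction.stabilizer (ConjAct (Heis F ⋊[φ] SL2 F)) g) = q ^ 2 := by
    rw [← Nat.card_congr e2]
    exact hC
  have hSL : Nat.card (SL2 F) = (q ^ 2 - 1) * q := by
    have h := card_SL2 (F := F)
    rw [hF] at h
    have key : (q ^ 2 - 1) * (q ^ 2 - q) = ((q ^ 2 - 1) * q) * (q - 1) := by
      rw [show q ^ 2 - q = q * (q - 1) by rw [Nat.mul_sub]; ring_nf]
      ring
    rw [key] at h
    exact Nat.eq_of_mul_eq_mul_right (by omega) h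
  have hHeis : Nat.card (Heis F) = q ^ 3 := by
    rw [Nat.card_congr (heisEquivProd (F := F)), Nat.card_prod,
      Nat.card_eq_fintype_card, Nat.card_eq_fintype_card, Fintype.card_fun,
      Fintype.card_fin, hF]
    ring
  have hG : Nat.card (Heis F ⋊[φ] SL2 F) = q ^ 3 * ((q ^ 2 - 1) * q) := by
    rw [Nat.card_congr (sdpEquivProd φ), Nat.card_prod, hHeis, hSL]
  have hConjG : Nat.card (ConjAct (Heis F ⋊[φ] SL2 F)) =
      Nat.card (Heis F ⋊[φ] SL2 F) :=
    Nat.card_congr (ConjAct.ofConjAct (G := Heis F ⋊[φ] SL2 F)).toEquiv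
  have key := Subgroup.card_mul_index
    (MulAction.stabilizer (ConjAct (Heis F ⋊[φ] SL2 F)) g)
  rw [hstab, hConjG, hG] at key
  rw [horb]
  have hqpos : 0 < q ^ 2 := by positivity
  apply Nat.eq_of_mul_eq_mul_left hqpos
  rw [key]
  ring
end
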